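/- Let κ be an infinite cardinal with κ^ω = κ. Then there exists a family (ℰ_T : T ∈ 𝒯) of subsets of (ℤ^(κ))^ω such that: (1) for every T ∈ 𝒯, ℰ_T is maximal with respect to inclusion among the subsets of (ℤ^(κ))^ω that are linearly independent mod l(T)*; and (2) for every T ∈ 𝒯 and n ≤ length(T), ℰ_{T↾n} ⊆ ℰ_T. -/

import Mathlib

open Cardinal Filter Set Pointwise

noncomputable section

/-- A free (nonprincipal) ultrafilter on ω. -/
def IsFreeUltrafilter (p : Ultrafilter ℕ) : Prop := ∀ n : ℕ, p ≠ pure n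

/-- A selective ultrafilter on ω. -/
def IsSelective (p : Ultrafilter ℕ) : Prop :=
  IsFreeUltrafilter p ∧
  ∀ A : ℕ → Set ℕ,
    (∀ k, (A k).Nonempty) → (Pairwise fun k l => Disjoint (A k) (A l)) →
    (⋃ k, A k) = Set.univ →
    (∃ k, A k ∈ p) ∨ ∃ B ∈ p, ∀ k, ∃! n, n ∈ B ∩ A k

/-- Rudin–Keisler order: `U ≤ V` iff `V = f_*(U)` for some `f`. -/
def RKle (U V : Ultrafilter ℕ) : Prop := ∃ f : ℕ → ℕ, Ultrafilter.map f U = V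

/-- Rudin–Keisler incomparability. -/
def RKIncomp (U V : Ultrafilter ℕ) : Prop := ¬ RKle U V ∧ ¬ RKle V U

/-- The index set of order type (the initial ordinal of) `κ`. -/
abbrev Idx (κ : Cardinal) : Type _ := ↥(Set.Iio κ.ord)

/-- The free abelian group `ℤ^(κ)` of finitely supported integer functions on `κ`. -/
abbrev GZ (κ : Cardinal) := Idx κ →₀ ℤ

/-- The ℚ-vector space `ℚ^(κ)` of finitely supported rational functions on `κ`. -/
abbrev GQ (κ : Cardinal) := Idx κ →₀ ℚ

/-- The canonical embedding `ℤ^(κ) → ℚ^(κ)`. -/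
def toQ (κ : Cardinal) (f : GZ κ) : GQ κ :=
  Finsupp.mapRange (Int.cast : ℤ → ℚ) Int.cast_zero f

/-- The characteristic function `χ_ξ`. -/
def chi (κ : Cardinal) (ξ : Idx κ) : GZ κ := Finsupp.single ξ 1

/-- The class `[f]_p` of a sequence `f : ω → ℤ^(κ)` in the ultrapower
`Ult(ℚ, p) = (ℚ^(κ))^ω / p`, realized as a germ. -/
def cls (κ : Cardinal) (p : Ultrafilter ℕ) (f : ℕ → GZ κ) :
    Filter.Germ (↑p : Filter ℕ) (GQ κ) :=
  (↑(fun n => toQ κ (f n)) : Filter.Germ (↑p : Filter ℕ) (GQ κ))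

/-- The class `[χ⃗_ξ]_p` of the constant sequence with value `χ_ξ`. -/
def clsChi (κ : Cardinal) (p : Ultrafilter ℕ) (ξ : Idx κ) :
    Filter.Germ (↑p : Filter ℕ) (GQ κ) :=
  cls κ p (fun _ => chi κ ξ)

/-- `cls` as an additive homomorphism. -/
def clsHom (κ : Cardinal) (p : Ultrafilter ℕ) :
    (ℕ → GZ κ) →+ Filter.Germ (↑p : Filter ℕ) (GQ κ) :=
  AddMonoidHom.mk' (cls κ p) (by
    intro a b
    unfold cls
    have h : (fun n => toQ κ ((a + b) n)) =
        (fun n => toQ κ (a n)) + (fun n => toQ κ (b n)) := by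
      funext n
      simp only [Pi.add_apply, toQ]
      exact Finsupp.mapRange_add (fun x y => by push_cast; ring) _ _
    rw [h, ← Filter.Germ.coe_add])

/-- `Ult(ℤ, p)`: the subgroup of `Ult(ℚ, p)` consisting of classes of
integer-valued sequences. -/
def UltZ (κ : Cardinal) (p : Ultrafilter ℕ) :
    AddSubgroup (Filter.Germ (↑p : Filter ℕ) (GQ κ)) :=
  (clsHom κ p).range

/-- `ℱ` is linearly independent mod `A*`. -/
def LinIndepMod (κ : Cardinal) (A : Set ℕ) (F : Set (ℕ → GZ κ)) : Prop :=
  ∀ p : Ultrafilter ℕ, IsFreeUltrafilter p → A ∈ p →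
    (∀ f ∈ F, ∀ g ∈ F, f ≠ g → cls κ p f ≠ cls κ p g) ∧
    LinearIndependent ℚ
      (Sum.elim (fun f : F => cls κ p ↑f) (fun ξ : Idx κ => clsChi κ p ξ))

/-- `ℰ` is maximal (w.r.t. inclusion) among subsets linearly independent mod `A*`. -/
def MaximalLinIndepMod (κ : Cardinal) (A : Set ℕ) (E : Set (ℕ → GZ κ)) : Prop :=
  LinIndepMod κ A E ∧ ∀ E' : Set (ℕ → GZ κ), LinIndepMod κ A E' → E ⊆ E' → E' = E

/-- A finite tower in ω: a finite decreasing sequence of infinite subsets of ω. -/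
def IsTower (T : List (Set ℕ)) : Prop :=
  (∀ A ∈ T, A.Infinite) ∧
  ∀ i : ℕ, ∀ h : i + 1 < T.length, T.get ⟨i + 1, h⟩ ⊆ T.get ⟨i, Nat.lt_of_succ_lt h⟩

/-- `l(T)`: the last term of a finite tower, with `l(∅) = ω`. -/
def lastOf (T : List (Set ℕ)) : Set ℕ := T.getLastD Set.univ

/-- `x` is a `p`-limit of the sequence `s`. -/
def IsPLim {X : Type*} [TopologicalSpace X] (p : Ultrafilter ℕ) (s : ℕ → X) (x : X) : Prop :=
  ∀ U ∈ nhds x, {n | s n ∈ U} ∈ p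

/-- Countable compactness: every countable open cover has a finite subcover. -/
def CountablyCompactSp (X : Type*) [TopologicalSpace X] : Prop :=
  ∀ 𝒰 : Set (Set X), 𝒰.Countable → (∀ u ∈ 𝒰, IsOpen u) → ⋃₀ 𝒰 = Set.univ →
    ∃ ℱ ⊆ 𝒰, ℱ.Finite ∧ ⋃₀ ℱ = Set.univ


section Aux

/-- The constant-germ map as a `ℚ`-linear map. -/
def constL (κ : Cardinal) (p : Ultrafilter ℕ) :
    GQ κ →ₗ[ℚ] Filter.Germ (↑p : Filter ℕ) (GQ κ) where
  toFun x := (↑(fun _ : ℕ => x) : Filter.Germ (↑p : Filter ℕ) (GQ κ))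
  map_add' a b := Filter.Germ.coe_add (fun _ : ℕ => a) (fun _ : ℕ => b)
  map_smul' c x := Filter.Germ.coe_smul c (fun _ : ℕ => x)

lemma constL_injective (κ : Cardinal) (p : Ultrafilter ℕ) :
    Function.Injective (constL κ p) := by
  intro a b h
  exact Filter.Germ.const_inj.mp h

lemma chiIndep (κ : Cardinal) (p : Ultrafilter ℕ) :
    LinearIndependent ℚ (clsChi κ p) := by
  have h := (Finsupp.basisSingleOne (R := ℚ) (ι := Idx κ)).linearIndependent
  have h2 := h.map' (constL κ p)
    (LinearMap.ker_eq_bot.mpr (constL_injective κ p))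
  have : clsChi κ p = ⇑(constL κ p) ∘ ⇑(Finsupp.basisSingleOne (R := ℚ) (ι := Idx κ)) := by
    funext ξ
    show clsChi κ p ξ = constL κ p (Finsupp.basisSingleOne ξ)
    unfold clsChi cls chi toQ
    simp only [Finsupp.mapRange_single, Finsupp.coe_basisSingleOne]
    rfl
  rw [this]
  exact h2

lemma linIndepMod_empty (κ : Cardinal) (A : Set ℕ) : LinIndepMod κ A (∅ : Set (ℕ → GZ κ)) := by
  intro p hp hA
  haveI : IsEmpty ↥(∅ : Set (ℕ → GZ κ)) := Set.isEmpty_coe_sort.mpr rfl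
  constructor
  · intro f hf
    exact absurd hf (by simp)
  · apply linearIndependent_sum.mpr
    refine ⟨linearIndependent_empty_type, chiIndep κ p, ?_⟩
    have : Set.range ((Sum.elim (fun f : ↥(∅ : Set (ℕ → GZ κ)) => cls κ p ↑f)
        (fun ξ : Idx κ => clsChi κ p ξ)) ∘ Sum.inl) = ∅ := Set.range_eq_empty _
    rw [this]
    simp

lemma linIndepMod_mono {κ : Cardinal} {A B : Set ℕ} {F : Set (ℕ → GZ κ)}
    (hAB : A ⊆ B) (h : LinIndepMod κ B F) : LinIndepMod κ A F :=
  fun p hp hA => h p hp (Filter.mem_of_superset hA hAB)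

lemma exists_chain_mem {X : Type*} {c : Set (Set X)} (hc : IsChain (· ⊆ ·) c)
    (hne : c.Nonempty) (fs : Finset X) (h : ∀ x ∈ fs, x ∈ ⋃₀ c) :
    ∃ E ∈ c, ∀ x ∈ fs, x ∈ E := by
  classical
  induction fs using Finset.induction_on with
  | empty => exact hne.imp fun E hE => ⟨hE, by simp⟩
  | @insert a s ha ih =>
    obtain ⟨E, hEc, hEs⟩ := ih (fun x hx => h x (Finset.mem_insert_of_mem hx))
    obtain ⟨E', hE'c, haE'⟩ := h a (Finset.mem_insert_self a s)
    rcases hc.total hEc hE'c with hle | hle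
    · exact ⟨E', hE'c, fun x hx => by
        rcases Finset.mem_insert.mp hx with rfl | hx
        · exact haE'
        · exact hle (hEs x hx)⟩
    · exact ⟨E, hEc, fun x hx => by
        rcases Finset.mem_insert.mp hx with rfl | hx
        · exact hle haE'
        · exact hEs x hx⟩

lemma linIndepMod_sUnion {κ : Cardinal} {A : Set ℕ} {c : Set (Set (ℕ → GZ κ))}
    (hc : IsChain (· ⊆ ·) c) (hne : c.Nonempty)
    (h : ∀ E ∈ c, LinIndepMod κ A E) : LinIndepMod κ A (⋃₀ c) := by
  classical
  intro p hp hA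
  constructor
  · rintro f ⟨E1, hE1, hf1⟩ g ⟨E2, hE2, hg2⟩ hfg
    rcases hc.total hE1 hE2 with hle | hle
    · exact (h E2 hE2 p hp hA).1 f (hle hf1) g hg2 hfg
    · exact (h E1 hE1 p hp hA).1 f hf1 g (hle hg2) hfg
  · rw [linearIndependent_iff']
    set U := ⋃₀ c with hU
    set v : ↥U ⊕ Idx κ → Filter.Germ (↑p : Filter ℕ) (GQ κ) :=
      Sum.elim (fun f : ↥U => cls κ p ↑f) (fun ξ : Idx κ => clsChi κ p ξ) with hv
    intro s g hsum i hi
    have hfs : ∀ x ∈ s.toLeft.image (Subtype.val), x ∈ ⋃₀ c := by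
      intro x hx
      obtain ⟨a, _, rfl⟩ := Finset.mem_image.mp hx
      exact a.2
    obtain ⟨E, hEc, hEall⟩ := exists_chain_mem hc hne _ hfs
    have hEU : E ⊆ U := Set.subset_sUnion_of_mem hEc
    have hE2 := (h E hEc p hp hA).2
    set n : (↥E ⊕ Idx κ) → (↥U ⊕ Idx κ) := Sum.map (Set.inclusion hEU) id with hn
    have hninj : Function.Injective n :=
      Function.Injective.sumMap (Set.inclusion_injective hEU) (fun _ _ h => h)
    have hrange : ∀ x ∈ s, ∃ j, n j = x := by
      intro x hx
      cases x with
      | inl u =>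
        have hu : (u : ℕ → GZ κ) ∈ E :=
          hEall _ (Finset.mem_image_of_mem _ (Finset.mem_toLeft.mpr hx))
        exact ⟨Sum.inl ⟨u.1, hu⟩, by simp [hn, Set.inclusion]⟩
      | inr ξ => exact ⟨Sum.inr ξ, rfl⟩
    have hsum2 : ∑ j ∈ s.preimage n hninj.injOn, g (n j) • v (n j) = 0 := by
      rw [Finset.sum_preimage n s hninj.injOn (fun i => g i • v i) ?_]
      · exact hsum
      · intro x hx hnx
        obtain ⟨j, hj⟩ := hrange x hx
        exact absurd ⟨j, hj⟩ hnx
    have hsumE : ∑ j ∈ s.preimage n hninj.injOn,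
        (g ∘ n) j • (Sum.elim (fun f : ↥E => cls κ p ↑f)
          (fun ξ : Idx κ => clsChi κ p ξ)) j = 0 := by
      rw [← hsum2]
      exact Finset.sum_congr rfl (fun j _ => by cases j <;> rfl)
    have key := linearIndependent_iff'.mp hE2 (s.preimage n hninj.injOn) (g ∘ n) hsumE
    obtain ⟨j, rfl⟩ := hrange i hi
    exact key j (Finset.mem_preimage.mpr hi)

lemma exists_maximal_linIndepMod {κ : Cardinal} {A : Set ℕ} {F : Set (ℕ → GZ κ)}
    (hF : LinIndepMod κ A F) : ∃ E, F ⊆ E ∧ MaximalLinIndepMod κ A E := by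
  obtain ⟨m, hFm, hmax⟩ := zorn_subset_nonempty {E : Set (ℕ → GZ κ) | LinIndepMod κ A E}
    (fun c hcS hchain hcne =>
      ⟨⋃₀ c, linIndepMod_sUnion hchain hcne (fun E hE => hcS hE),
        fun s hs => Set.subset_sUnion_of_mem hs⟩) F hF
  exact ⟨m, hFm, hmax.prop,
    fun E' hE' hsub => subset_antisymm (hmax.2 hE' hsub) hsub⟩

open Classical in
/-- A maximal extension of `F` (when `F` is linearly independent mod `A*`). -/
def ExtSet (κ : Cardinal) (A : Set ℕ) (F : Set (ℕ → GZ κ)) : Set (ℕ → GZ κ) :=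
  if h : LinIndepMod κ A F then (exists_maximal_linIndepMod h).choose else F

lemma subset_extSet (κ : Cardinal) (A : Set ℕ) (F : Set (ℕ → GZ κ)) :
    F ⊆ ExtSet κ A F := by
  unfold ExtSet
  by_cases h : LinIndepMod κ A F
  · rw [dif_pos h]
    exact (exists_maximal_linIndepMod h).choose_spec.1
  · rw [dif_neg h]

lemma extSet_max {κ : Cardinal} {A : Set ℕ} {F : Set (ℕ → GZ κ)}
    (h : LinIndepMod κ A F) : MaximalLinIndepMod κ A (ExtSet κ A F) := by
  unfold ExtSet
  rw [dif_pos h]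
  exact (exists_maximal_linIndepMod h).choose_spec.2

/-- The recursive construction over reversed towers. -/
def buildRev (κ : Cardinal) : List (Set ℕ) → Set (ℕ → GZ κ)
  | [] => ExtSet κ Set.univ ∅
  | A :: L => ExtSet κ A (buildRev κ L)

lemma buildRev_max (κ : Cardinal) :
    ∀ R : List (Set ℕ), List.Chain' (· ⊆ ·) R →
      MaximalLinIndepMod κ (R.headD Set.univ) (buildRev κ R)
  | [], _ => extSet_max (linIndepMod_empty κ Set.univ)
  | A :: L, h => by
    have hL := buildRev_max κ L h.tail
    have hA : A ⊆ L.headD Set.univ := by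
      cases L with
      | nil => exact Set.subset_univ A
      | cons B L' => exact (List.isChain_cons_cons.mp h).1
    exact extSet_max (linIndepMod_mono hA hL.1)

lemma buildRev_drop (κ : Cardinal) :
    ∀ (R : List (Set ℕ)) (m : ℕ), buildRev κ (R.drop m) ⊆ buildRev κ R
  | _, 0 => subset_rfl
  | [], _ + 1 => by simp
  | A :: L, m + 1 => by
    have h1 : buildRev κ ((A :: L).drop (m + 1)) = buildRev κ (L.drop m) := rfl
    rw [h1]
    exact (buildRev_drop κ L m).trans (subset_extSet κ A (buildRev κ L))

end Aux

theorem statement6 (κ : Cardinal) (hκ : ℵ₀ ≤ κ) (hpow : κ ^ ℵ₀ = κ) :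
    ∃ E : List (Set ℕ) → Set (ℕ → GZ κ),
      (∀ T, IsTower T → MaximalLinIndepMod κ (lastOf T) (E T)) ∧
      (∀ T, IsTower T → ∀ n ≤ T.length, E (T.take n) ⊆ E T) := by
  refine ⟨fun T => buildRev κ T.reverse, ?_, ?_⟩
  · intro T hT
    have hch : List.Chain' (· ⊆ ·) T.reverse := by
      rw [List.Chain', List.isChain_reverse, List.isChain_iff_getElem]
      intro i hi
      exact hT.2 i (by omega)
    have hlast : lastOf T = T.reverse.headD Set.univ := by
      rw [lastOf, List.getLastD_eq_getLast?, List.headD_eq_head?, List.head?_reverse]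
    rw [hlast]
    exact buildRev_max κ T.reverse hch
  · intro T hT n hn
    show buildRev κ (T.take n).reverse ⊆ buildRev κ T.reverse
    have h1 : (T.take n).reverse = T.reverse.drop (T.length - n) := List.reverse_take
    rw [h1]
    exact buildRev_drop κ T.reverse (T.length - n)


end
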